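/- (Geodesic descent for nearest-neighbour search via Delaunay structure) Let Ω be a geodesic metric space (every two points joined by a shortest path), X ⊆ Ω finite, and q ∈ Ω. If x ∈ X is not a nearest neighbour of q in X, then there exists a point p on a geodesic from x to q and a datapoint y ∈ X with d(p, y) ≤ d(p, x) (p lies in the Voronoi cell boundary/another cell), and moreover there exists y ∈ X whose Voronoi cell intersects the closure of the Voronoi cell of x and with d(q, y) < d(q, x). -/

import Mathlib

/-- A metric space is geodesic if every two points are joined by a shortest
(isometric) path. -/
def IsGeodesicSpace (Ω : Type*) [MetricSpace Ω] : Prop :=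
  ∀ x y : Ω, ∃ γ : ℝ → Ω, γ 0 = x ∧ γ (dist x y) = y ∧
    ∀ s ∈ Set.Icc (0 : ℝ) (dist x y), ∀ t ∈ Set.Icc (0 : ℝ) (dist x y),
      dist (γ s) (γ t) = |s - t|

/-- The (closed) Voronoi cell of `x ∈ X`. -/
def VorCell {Ω : Type*} [MetricSpace Ω] (X : Finset Ω) (x : Ω) : Set Ω :=
  {ω | ∀ y ∈ X, dist ω x ≤ dist ω y}

/-- Geodesic descent: if `x ∈ X` is not a nearest neighbour of `q`, then along
a geodesic from `x` to `q` there is a point `p` and a datapoint `y ≠ x` with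
`d(p, y) ≤ d(p, x)`; moreover some `y ∈ X` that is Delaunay-adjacent to `x`
(its closed Voronoi cell meets that of `x`) is strictly closer to `q`. -/
theorem geodesic_descent {Ω : Type*} [MetricSpace Ω] (hgeo : IsGeodesicSpace Ω)
    (X : Finset Ω) (q x : Ω) (hx : x ∈ X)
    (hnotNN : ¬ ∀ y ∈ X, dist q x ≤ dist q y) :
    (∃ γ : ℝ → Ω, γ 0 = x ∧ γ (dist x q) = q ∧
      (∀ s ∈ Set.Icc (0 : ℝ) (dist x q), ∀ t ∈ Set.Icc (0 : ℝ) (dist x q),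
        dist (γ s) (γ t) = |s - t|) ∧
      ∃ t ∈ Set.Icc (0 : ℝ) (dist x q), ∃ y ∈ X, y ≠ x ∧
        dist (γ t) y ≤ dist (γ t) x) ∧
    ∃ y ∈ X, y ≠ x ∧ (VorCell X x ∩ VorCell X y).Nonempty ∧
      dist q y < dist q x := by
  push_neg at hnotNN
  obtain ⟨w, hwX, hw⟩ := hnotNN
  obtain ⟨γ, hγ0, hγL, hγiso⟩ := hgeo x q
  set L := dist x q with hLdef
  have hL0 : (0:ℝ) ≤ L := dist_nonneg
  have hwx : w ≠ x := by rintro rfl; exact lt_irrefl _ hw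
  have h0mem : (0:ℝ) ∈ Set.Icc (0:ℝ) L := ⟨le_refl 0, hL0⟩
  have hLmem : L ∈ Set.Icc (0:ℝ) L := ⟨hL0, le_refl L⟩
  have hdx : ∀ t ∈ Set.Icc (0:ℝ) L, dist (γ t) x = t := by
    intro t ht
    have h := hγiso t ht 0 h0mem
    rw [hγ0] at h
    rw [h, sub_zero, abs_of_nonneg ht.1]
  have hdq : ∀ t ∈ Set.Icc (0:ℝ) L, dist (γ t) q = L - t := by
    intro t ht
    have h := hγiso t ht L hLmem
    rw [hγL] at h
    rw [h, abs_of_nonpos (by linarith [ht.2]), neg_sub]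
  -- the set of parameters where some datapoint is strictly closer than x
  set S : Set ℝ := {t | t ∈ Set.Icc (0:ℝ) L ∧ ∃ z ∈ X, dist (γ t) z < dist (γ t) x}
    with hSdef
  have hLS : L ∈ S := by
    refine ⟨hLmem, w, hwX, ?_⟩
    rw [hγL]
    exact hw
  have hne : S.Nonempty := ⟨L, hLS⟩
  have hbdd : BddBelow S := ⟨0, fun s hs => hs.1.1⟩
  set T : ℝ := sInf S with hTdef
  have hT0 : 0 ≤ T := le_csInf hne (fun s hs => hs.1.1)
  have hTL : T ≤ L := csInf_le hbdd hLS
  have hTmem : T ∈ Set.Icc (0:ℝ) L := ⟨hT0, hTL⟩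
  set p : Ω := γ T with hpdef
  have hpx : dist p x = T := hdx T hTmem
  -- p is in the Voronoi cell of x
  have hpV : ∀ z ∈ X, T ≤ dist p z := by
    intro z hz
    by_contra hcon
    push_neg at hcon
    set ε : ℝ := (T - dist p z) / 4 with hεdef
    have hd0 : 0 ≤ dist p z := dist_nonneg
    have hε : 0 < ε := by rw [hεdef]; linarith
    set t : ℝ := T - ε with htdef
    have htmem : t ∈ Set.Icc (0:ℝ) L := ⟨by linarith, by linarith⟩
    have hdist : dist (γ t) p = ε := by
      have h := hγiso t htmem T hTmem
      rw [← hpdef] at h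
      rw [h, abs_of_nonpos (by linarith), neg_sub, htdef]
      ring
    have htS : t ∈ S := by
      refine ⟨htmem, z, hz, ?_⟩
      have h1 : dist (γ t) z ≤ dist (γ t) p + dist p z := dist_triangle _ _ _
      rw [hdist] at h1
      rw [hdx t htmem]
      linarith
    have hle : sInf S ≤ t := csInf_le hbdd htS
    linarith
  -- a uniform margin for datapoints strictly farther from p than x is
  have hδ : ∃ δ > (0:ℝ), ∀ z ∈ X, T < dist p z → T + δ ≤ dist p z := by
    by_cases hF : (X.filter (fun z => T < dist p z)).Nonempty
    · refine ⟨(X.filter (fun z => T < dist p z)).inf' hF (fun z => dist p z - T),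
        ?_, ?_⟩
      · rw [gt_iff_lt, Finset.lt_inf'_iff]
        intro z hz
        have := (Finset.mem_filter.mp hz).2
        linarith
      · intro z hz hzlt
        have hmem : z ∈ X.filter (fun z => T < dist p z) :=
          Finset.mem_filter.mpr ⟨hz, hzlt⟩
        have := Finset.inf'_le (fun z => dist p z - T) hmem
        linarith
    · exact ⟨1, one_pos, fun z hz hzlt =>
        absurd ⟨z, Finset.mem_filter.mpr ⟨hz, hzlt⟩⟩ hF⟩
  obtain ⟨δ, hδ0, hδmargin⟩ := hδ
  -- pick s ∈ S with T ≤ s < T + δ/2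
  obtain ⟨s, hsS, hslt⟩ := exists_lt_of_csInf_lt hne (by linarith :
    sInf S < T + δ / 2)
  have hTs : T ≤ s := csInf_le hbdd hsS
  obtain ⟨hsmem, z₀, hz₀X, hz₀⟩ := hsS
  rw [hdx s hsmem] at hz₀
  have hsp : dist (γ s) p = s - T := by
    have h := hγiso s hsmem T hTmem
    rw [← hpdef] at h
    rw [h, abs_of_nonneg (by linarith)]
  have hz₀x : z₀ ≠ x := by
    rintro rfl
    rw [hdx s hsmem] at hz₀
    exact lt_irrefl _ hz₀
  -- z₀ must be one of the cells containing p
  have hpz₀ : dist p z₀ ≤ T := by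
    by_contra hcon
    push_neg at hcon
    have h1 : T + δ ≤ dist p z₀ := hδmargin z₀ hz₀X hcon
    have h2 : dist p z₀ ≤ dist p (γ s) + dist (γ s) z₀ := dist_triangle _ _ _
    rw [dist_comm p (γ s), hsp] at h2
    linarith
  refine ⟨⟨γ, hγ0, hγL, hγiso, L, hLmem, w, hwX, hwx, ?_⟩,
    z₀, hz₀X, hz₀x, ⟨p, ?_, ?_⟩, ?_⟩
  · rw [hγL]
    exact le_of_lt hw
  · intro z hz
    rw [hpx]
    exact hpV z hz
  · intro z hz
    calc dist p z₀ ≤ T := hpz₀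
      _ ≤ dist p z := hpV z hz
  · calc dist q z₀ ≤ dist q (γ s) + dist (γ s) z₀ := dist_triangle _ _ _
      _ < (L - s) + s := by
          rw [dist_comm q (γ s), hdq s hsmem]
          exact add_lt_add_right hz₀ _
      _ = L := by ring
      _ = dist q x := dist_comm x q
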